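/- Let p, q, r be integers and let T = !![p, r; 0, q] over ℤ. Define g(p, q) to be the minimum of the set {g : ∃ a x d u ∈ ℤ, p = a² − x² ∧ q = d² − u² ∧ g = gcd(a+d, x+u) ∧ g > 0}. Then T can be written as A² − B² for some upper-triangular 2×2 integer matrices A and B if and only if: (1) p and q are each representable as a difference of two integer squares, and (2) g(p, q) divides r. -/

import Mathlib

/-- A 2×2 matrix is upper-triangular if its lower-left entry is 0. -/
def IsUpperTriangular {R : Type*} [Ring R] (A : Matrix (Fin 2) (Fin 2) R) : Prop :=
  A 1 0 = 0

/-- `T` is representable as a difference of two squares of upper-triangular matrices. -/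
def ReprDiffSqUT {R : Type*} [Ring R] (T : Matrix (Fin 2) (Fin 2) R) : Prop :=
  ∃ A B : Matrix (Fin 2) (Fin 2) R,
    IsUpperTriangular A ∧ IsUpperTriangular B ∧ T = A ^ 2 - B ^ 2


lemma sq_even (a : ℤ) (h : a % 2 = 0) : ∃ t, a = 2*t ∧ a^2 = 4*t^2 := by
  obtain ⟨t, rfl⟩ : ∃ t, a = 2*t := ⟨a/2, by omega⟩
  exact ⟨t, rfl, by ring⟩

lemma sq_odd (a : ℤ) (h : a % 2 = 1) : ∃ t m, a = 2*t+1 ∧ a^2 = 8*m+1 := by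
  obtain ⟨t, rfl⟩ : ∃ t, a = 2*t+1 := ⟨a/2, by omega⟩
  obtain ⟨m, hm⟩ : Even (t^2 + t) := by
    rcases Int.even_or_odd t with ⟨s, rfl⟩ | ⟨s, rfl⟩
    · exact ⟨2*s^2+s, by ring⟩
    · exact ⟨2*s^2+3*s+1, by ring⟩
  exact ⟨t, m, rfl, by nlinarith [hm]⟩

lemma emod2 (a : ℤ) : a % 2 = 0 ∨ a % 2 = 1 := by omega

lemma diff_sq_mod4 (p a x : ℤ) (h : p = a^2 - x^2) :
    (p % 4 = 0 ∧ a % 2 = x % 2) ∨ (p % 4 = 1 ∧ a % 2 = 1 ∧ x % 2 = 0) ∨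
      (p % 4 = 3 ∧ a % 2 = 0 ∧ x % 2 = 1) := by
  rcases emod2 a with ha | ha <;> rcases emod2 x with hx | hx
  · obtain ⟨s, _, hs⟩ := sq_even a ha; obtain ⟨t, _, ht⟩ := sq_even x hx
    left; omega
  · obtain ⟨s, _, hs⟩ := sq_even a ha; obtain ⟨t, _, ht⟩ := sq_odd x hx
    right; right; omega
  · obtain ⟨s, _, hs⟩ := sq_odd a ha; obtain ⟨t, _, ht⟩ := sq_even x hx
    right; left; omega
  · obtain ⟨s, m, _, hs⟩ := sq_odd a ha; obtain ⟨t, m', _, ht⟩ := sq_odd x hx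
    left; omega

lemma diff_sq_mod8 (p a x : ℤ) (h : p = a^2 - x^2) (h8 : p % 8 = 4) :
    ∃ α ξ, a = 2*α ∧ x = 2*ξ ∧ p = 4*(α^2 - ξ^2) := by
  rcases emod2 a with ha | ha <;> rcases emod2 x with hx | hx
  · obtain ⟨s, hs0, hs⟩ := sq_even a ha; obtain ⟨t, ht0, ht⟩ := sq_even x hx
    exact ⟨s, t, hs0, ht0, by omega⟩
  · obtain ⟨s, _, hs⟩ := sq_even a ha; obtain ⟨t, _, _, ht⟩ := sq_odd x hx; omega
  · obtain ⟨s, _, _, hs⟩ := sq_odd a ha; obtain ⟨t, _, ht⟩ := sq_even x hx; omega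
  · obtain ⟨s, m, _, hs⟩ := sq_odd a ha; obtain ⟨t, m', _, ht⟩ := sq_odd x hx; omega

lemma diff_sq_mod16 (p a x : ℤ) (h : p = a^2 - x^2) (h16 : p % 16 = 8) :
    a % 2 = 1 ∧ x % 2 = 1 := by
  rcases emod2 a with ha | ha <;> rcases emod2 x with hx | hx
  · obtain ⟨s, hs0, hs⟩ := sq_even a ha; obtain ⟨t, ht0, ht⟩ := sq_even x hx
    exfalso
    rcases diff_sq_mod4 (s^2-t^2) s t rfl with ⟨h4, _⟩ | ⟨h4, _⟩ | ⟨h4, _⟩ <;>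
      (generalize hT : s^2 - t^2 = T at h4 hs ht ⊢; omega)
  · obtain ⟨s, _, hs⟩ := sq_even a ha; obtain ⟨t, _, _, ht⟩ := sq_odd x hx; omega
  · obtain ⟨s, _, _, hs⟩ := sq_odd a ha; obtain ⟨t, _, ht⟩ := sq_even x hx; omega
  · exact ⟨ha, hx⟩

lemma gcd_one_of_odd (m n : ℤ) (hm : m % 2 = 1) (h : (↑(Int.gcd m n):ℤ) ∣ 4) :
    Int.gcd m n = 1 := by
  have hg : (↑(Int.gcd m n):ℤ) ∣ m := (Int.gcd_dvd_left _ _)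
  have h4 : Int.gcd m n ∣ 4 := by exact_mod_cast h
  have hle : Int.gcd m n ≤ 4 := Nat.le_of_dvd (by norm_num) h4
  interval_cases hG : Int.gcd m n <;> first
    | rfl
    | (exfalso; push_cast at hg; omega)
    | (exfalso; norm_num at h4)

lemma gcd_two_a (m n : ℤ) (hm : m % 2 = 0) (hn : n % 2 = 0)
    (h : (↑(Int.gcd m n):ℤ) ∣ 2) : Int.gcd m n = 2 := by
  have h2 : (2:ℤ) ∣ (↑(Int.gcd m n):ℤ) := Int.dvd_coe_gcd (by omega) (by omega)
  have h2' : 2 ∣ Int.gcd m n := by exact_mod_cast h2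
  have h4 : Int.gcd m n ∣ 2 := by exact_mod_cast h
  exact Nat.dvd_antisymm h4 h2'

lemma gcd_two_b (m n : ℤ) (hm : m % 2 = 0) (hn : n % 2 = 0) (hm4 : m % 4 = 2)
    (h : (↑(Int.gcd m n):ℤ) ∣ 4) : Int.gcd m n = 2 := by
  have hg : (↑(Int.gcd m n):ℤ) ∣ m := (Int.gcd_dvd_left _ _)
  have h2 : (2:ℤ) ∣ (↑(Int.gcd m n):ℤ) := Int.dvd_coe_gcd (by omega) (by omega)
  have h2' : 2 ∣ Int.gcd m n := by exact_mod_cast h2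
  have h4 : Int.gcd m n ∣ 4 := by exact_mod_cast h
  have hle : Int.gcd m n ≤ 4 := Nat.le_of_dvd (by norm_num) h4
  interval_cases hG : Int.gcd m n <;> first
    | rfl
    | (exfalso; push_cast at hg; omega)
    | (exfalso; norm_num at h4)
    | (exfalso; norm_num at h2')

lemma gcd_four (m n : ℤ) (hm : m % 4 = 0) (hn : n % 4 = 0)
    (h : (↑(Int.gcd m n):ℤ) ∣ 4) : Int.gcd m n = 4 := by
  have h2 : (4:ℤ) ∣ (↑(Int.gcd m n):ℤ) := Int.dvd_coe_gcd (by omega) (by omega)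
  have h2' : 4 ∣ Int.gcd m n := by exact_mod_cast h2
  have h4 : Int.gcd m n ∣ 4 := by exact_mod_cast h
  exact Nat.dvd_antisymm h4 h2'

lemma gcd_cast_dvd (m n : ℤ) (c : ℤ) (h1 : m - n = c) : (↑(Int.gcd m n):ℤ) ∣ c := by
  subst h1; exact dvd_sub (Int.gcd_dvd_left _ _) (Int.gcd_dvd_right _ _)

lemma gcd_cast_dvd_add (m n : ℤ) (c : ℤ) (h1 : m + n = c) : (↑(Int.gcd m n):ℤ) ∣ c := by
  subst h1; exact dvd_add (Int.gcd_dvd_left _ _) (Int.gcd_dvd_right _ _)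

lemma gcd_one_of_sum (m n : ℤ) (h : m + n = -1) : Int.gcd m n = 1 := by
  have h0 := gcd_cast_dvd_add m n _ h
  have h1 : (↑(Int.gcd m n):ℤ) ∣ 1 := by simpa using h0
  have h2 : Int.gcd m n ∣ 1 := by exact_mod_cast h1
  exact Nat.dvd_one.mp h2

def Sset (p q : ℤ) : Set ℕ :=
  {g : ℕ | ∃ a x d u : ℤ, p = a ^ 2 - x ^ 2 ∧ q = d ^ 2 - u ^ 2 ∧
    g = Int.gcd (a + d) (x + u) ∧ g > 0}

lemma dvd_all_odd (p q : ℤ) (hp : p % 2 = 1) (hpq : p % 4 = q % 4) :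
    ∀ g ∈ Sset p q, 2 ∣ g := by
  rintro g ⟨a, x, d, u, hp', hq', hg, -⟩
  subst hg
  have h1 := diff_sq_mod4 p a x hp'
  have h2 := diff_sq_mod4 q d u hq'
  have h : (2:ℤ) ∣ ↑(Int.gcd (a+d) (x+u)) := Int.dvd_coe_gcd (by omega) (by omega)
  exact_mod_cast h

lemma dvd_all_8 (p q : ℤ) (hp : p % 8 = 4) (hq : q % 8 = 4) :
    ∀ g ∈ Sset p q, 2 ∣ g := by
  rintro g ⟨a, x, d, u, hp', hq', hg, -⟩
  subst hg
  obtain ⟨α, ξ, ha, hx, -⟩ := diff_sq_mod8 p a x hp' hp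
  obtain ⟨δ, υ, hd, hu, -⟩ := diff_sq_mod8 q d u hq' hq
  have h : (2:ℤ) ∣ ↑(Int.gcd (a+d) (x+u)) := Int.dvd_coe_gcd (by omega) (by omega)
  exact_mod_cast h

lemma dvd_all_16_8 (p q : ℤ) (hp : p % 16 = 8) (hq : q % 16 = 8) :
    ∀ g ∈ Sset p q, 2 ∣ g := by
  rintro g ⟨a, x, d, u, hp', hq', hg, -⟩
  subst hg
  obtain ⟨ha, hx⟩ := diff_sq_mod16 p a x hp' hp
  obtain ⟨hd, hu⟩ := diff_sq_mod16 q d u hq' hq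
  have h : (2:ℤ) ∣ ↑(Int.gcd (a+d) (x+u)) := Int.dvd_coe_gcd (by omega) (by omega)
  exact_mod_cast h

lemma dvd_all_16_4 (p q : ℤ) (hpq : p % 16 = q % 16) (hp8 : p % 8 = 4) :
    ∀ g ∈ Sset p q, 4 ∣ g := by
  rintro g ⟨a, x, d, u, hp', hq', hg, -⟩
  subst hg
  have hq8 : q % 8 = 4 := by omega
  obtain ⟨α, ξ, ha, hx, hP⟩ := diff_sq_mod8 p a x hp' hp8
  obtain ⟨δ, υ, hd, hu, hQ⟩ := diff_sq_mod8 q d u hq' hq8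
  have h1 := diff_sq_mod4 (α^2 - ξ^2) α ξ rfl
  have h2 := diff_sq_mod4 (δ^2 - υ^2) δ υ rfl
  generalize hT : α^2 - ξ^2 = T at h1 hP
  generalize hU : δ^2 - υ^2 = U at h2 hQ
  have h : (4:ℤ) ∣ ↑(Int.gcd (a+d) (x+u)) := Int.dvd_coe_gcd (by omega) (by omega)
  exact_mod_cast h

lemma key (p q : ℤ) (a0 x0 d0 u0 : ℤ) (hp0 : p = a0^2 - x0^2) (hq0 : q = d0^2 - u0^2) :
    ∃ D : ℕ, D ∈ Sset p q ∧ ∀ g ∈ Sset p q, D ∣ g := by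
  have hp4 := diff_sq_mod4 p a0 x0 hp0
  have hq4 := diff_sq_mod4 q d0 u0 hq0
  by_cases hpo : p % 2 = 1
  · obtain ⟨k, hk⟩ : ∃ k, p = 2*k+1 := ⟨p/2, by omega⟩
    have hprep : p = (k+1)^2 - k^2 := by
      rw [show ((k:ℤ)+1)^2 - k^2 = 2*k+1 from by ring]; omega
    by_cases hqo : q % 2 = 1
    · obtain ⟨l, hl⟩ : ∃ l, q = 2*l+1 := ⟨q/2, by omega⟩
      have hqrep : q = (l+1)^2 - l^2 := by
        rw [show ((l:ℤ)+1)^2 - l^2 = 2*l+1 from by ring]; omega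
      have hdvd4 : (↑(Int.gcd ((k+1)+(l+1)) (k+l)):ℤ) ∣ 2 := gcd_cast_dvd _ _ _ (by ring)
      by_cases h44 : p % 4 = q % 4
      · refine ⟨2, ⟨k+1, k, l+1, l, hprep, hqrep, ?_, by norm_num⟩, dvd_all_odd p q hpo h44⟩
        exact (gcd_two_a _ _ (by omega) (by omega) hdvd4).symm
      · refine ⟨1, ⟨k+1, k, l+1, l, hprep, hqrep, ?_, by norm_num⟩, fun g _ => one_dvd g⟩
        exact (gcd_one_of_odd _ _ (by omega) (hdvd4.trans (by norm_num))).symm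
    · -- p odd, q ≡ 0 mod 4
      obtain ⟨m, hm⟩ : ∃ m, q = 4*m := ⟨q/4, by omega⟩
      have hprep : p = (k+1)^2 - (-k)^2 := by
        rw [show ((k:ℤ)+1)^2 - (-k)^2 = 2*k+1 from by ring]; omega
      have hqrep : q = (-(m+1))^2 - (m-1)^2 := by
        rw [show (-((m:ℤ)+1))^2 - (m-1)^2 = 4*m from by ring]; omega
      refine ⟨1, ⟨k+1, -k, -(m+1), m-1, hprep, hqrep, ?_, by norm_num⟩, fun g _ => one_dvd g⟩
      exact (gcd_one_of_sum _ _ (by ring)).symm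
  · by_cases hqo : q % 2 = 1
    · -- q odd, p ≡ 0 mod 4
      obtain ⟨l, hl⟩ : ∃ l, q = 2*l+1 := ⟨q/2, by omega⟩
      obtain ⟨m, hm⟩ : ∃ m, p = 4*m := ⟨p/4, by omega⟩
      have hprep : p = (-(m+1))^2 - (m-1)^2 := by
        rw [show (-((m:ℤ)+1))^2 - (m-1)^2 = 4*m from by ring]; omega
      have hqrep : q = (l+1)^2 - (-l)^2 := by
        rw [show ((l:ℤ)+1)^2 - (-l)^2 = 2*l+1 from by ring]; omega
      refine ⟨1, ⟨-(m+1), m-1, l+1, -l, hprep, hqrep, ?_, by norm_num⟩, fun g _ => one_dvd g⟩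
      exact (gcd_one_of_sum _ _ (by ring)).symm
    · -- both ≡ 0 mod 4
      obtain ⟨P, hP⟩ : ∃ P, p = 4*P := ⟨p/4, by omega⟩
      obtain ⟨Q, hQ⟩ : ∃ Q, q = 4*Q := ⟨q/4, by omega⟩
      have hprep : p = (P+1)^2 - (P-1)^2 := by
        rw [show ((P:ℤ)+1)^2 - (P-1)^2 = 4*P from by ring]; omega
      have hqrep : q = (Q+1)^2 - (Q-1)^2 := by
        rw [show ((Q:ℤ)+1)^2 - (Q-1)^2 = 4*Q from by ring]; omega
      have hdvd4 : (↑(Int.gcd ((P+1)+(Q+1)) ((P-1)+(Q-1))):ℤ) ∣ 4 :=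
        gcd_cast_dvd _ _ _ (by ring)
      by_cases hPo : P % 2 = 1
      · by_cases hQo : Q % 2 = 1
        · by_cases h44 : P % 4 = Q % 4
          · refine ⟨4, ⟨P+1, P-1, Q+1, Q-1, hprep, hqrep, ?_, by norm_num⟩,
              dvd_all_16_4 p q (by omega) (by omega)⟩
            exact (gcd_four _ _ (by omega) (by omega) hdvd4).symm
          · refine ⟨2, ⟨P+1, P-1, Q+1, Q-1, hprep, hqrep, ?_, by norm_num⟩,
              dvd_all_8 p q (by omega) (by omega)⟩
            exact (gcd_two_b _ _ (by omega) (by omega) (by omega) hdvd4).symm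
        · refine ⟨1, ⟨P+1, P-1, Q+1, Q-1, hprep, hqrep, ?_, by norm_num⟩, fun g _ => one_dvd g⟩
          exact (gcd_one_of_odd _ _ (by omega) hdvd4).symm
      · by_cases hQo : Q % 2 = 1
        · refine ⟨1, ⟨P+1, P-1, Q+1, Q-1, hprep, hqrep, ?_, by norm_num⟩, fun g _ => one_dvd g⟩
          exact (gcd_one_of_odd _ _ (by omega) hdvd4).symm
        · -- P, Q both even
          by_cases hQ4 : Q % 4 = 0
          · -- construction with q-side factor (-4, -Q); works for any even P
            obtain ⟨n, hn⟩ : ∃ n, Q = 4*n := ⟨Q/4, by omega⟩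
            have hqrep' : q = (-(2+2*n))^2 - (2-2*n)^2 := by
              rw [show (-((2:ℤ)+2*n))^2 - (2-2*n)^2 = 16*n from by ring]; omega
            refine ⟨1, ⟨P+1, P-1, -(2+2*n), 2-2*n, hprep, hqrep', ?_, by norm_num⟩,
              fun g _ => one_dvd g⟩
            have hd2 : (↑(Int.gcd ((P+1)+(-(2+2*n))) ((P-1)+(2-2*n))):ℤ) ∣ -2 :=
              gcd_cast_dvd _ _ _ (by ring)
            exact (gcd_one_of_odd _ _ (by omega) (hd2.trans (by norm_num))).symm
          · by_cases hP4 : P % 4 = 0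
            · -- mirror
              obtain ⟨n, hn⟩ : ∃ n, P = 4*n := ⟨P/4, by omega⟩
              have hprep' : p = (-(2+2*n))^2 - (2-2*n)^2 := by
                rw [show (-((2:ℤ)+2*n))^2 - (2-2*n)^2 = 16*n from by ring]; omega
              refine ⟨1, ⟨-(2+2*n), 2-2*n, Q+1, Q-1, hprep', hqrep, ?_, by norm_num⟩,
                fun g _ => one_dvd g⟩
              have hd2 : (↑(Int.gcd ((-(2+2*n))+(Q+1)) ((2-2*n)+(Q-1))):ℤ) ∣ -2 :=
                gcd_cast_dvd _ _ _ (by ring)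
              exact (gcd_one_of_odd _ _ (by omega) (hd2.trans (by norm_num))).symm
            · -- P ≡ Q ≡ 2 mod 4
              refine ⟨2, ⟨P+1, P-1, Q+1, Q-1, hprep, hqrep, ?_, by norm_num⟩,
                dvd_all_16_8 p q (by omega) (by omega)⟩
              exact (gcd_two_b _ _ (by omega) (by omega) (by omega) hdvd4).symm

lemma entry_lemma (M : Matrix (Fin 2) (Fin 2) ℤ) (h : M 1 0 = 0) :
    (M^2) 0 0 = (M 0 0)^2 ∧ (M^2) 1 1 = (M 1 1)^2 ∧
    (M^2) 0 1 = M 0 1 * (M 0 0 + M 1 1) := by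
  rw [pow_two]
  refine ⟨?_, ?_, ?_⟩ <;> simp [Matrix.mul_apply, Fin.sum_univ_two, h] <;> ring

theorem g_pq_criterion (p q r : ℤ) :
    ReprDiffSqUT !![p, r; 0, q] ↔
      ((∃ x y : ℤ, p = x ^ 2 - y ^ 2) ∧ (∃ x y : ℤ, q = x ^ 2 - y ^ 2) ∧
        (((sInf {g : ℕ | ∃ a x d u : ℤ, p = a ^ 2 - x ^ 2 ∧ q = d ^ 2 - u ^ 2 ∧
          g = Int.gcd (a + d) (x + u) ∧ g > 0} : ℕ) : ℤ) ∣ r)) := by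
  have hset : {g : ℕ | ∃ a x d u : ℤ, p = a ^ 2 - x ^ 2 ∧ q = d ^ 2 - u ^ 2 ∧
      g = Int.gcd (a + d) (x + u) ∧ g > 0} = Sset p q := rfl
  rw [hset]
  constructor
  · rintro ⟨A, B, hA, hB, hT⟩
    obtain ⟨eA0, eA1, eA2⟩ := entry_lemma A hA
    obtain ⟨eB0, eB1, eB2⟩ := entry_lemma B hB
    have e00 := congrFun (congrFun hT 0) 0
    have e11 := congrFun (congrFun hT 1) 1
    have e01 := congrFun (congrFun hT 0) 1
    simp [Matrix.sub_apply, eA0, eB0, eA1, eB1, eA2, eB2] at e00 e11 e01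
    have hp : p = (A 0 0)^2 - (B 0 0)^2 := e00
    have hq : q = (A 1 1)^2 - (B 1 1)^2 := e11
    have hr : r = A 0 1 * (A 0 0 + A 1 1) - B 0 1 * (B 0 0 + B 1 1) := e01
    refine ⟨⟨A 0 0, B 0 0, hp⟩, ⟨A 1 1, B 1 1, hq⟩, ?_⟩
    obtain ⟨D, hD, hdvd⟩ := key p q _ _ _ _ hp hq
    have hmemS := Nat.sInf_mem (⟨D, hD⟩ : (Sset p q).Nonempty)
    have hpos : 0 < sInf (Sset p q) := by
      obtain ⟨_, _, _, _, _, _, _, h⟩ := hmemS; exact h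
    have hSeq : sInf (Sset p q) = D :=
      le_antisymm (Nat.sInf_le hD) (Nat.le_of_dvd hpos (hdvd _ hmemS))
    rw [hSeq]
    by_cases hg0 : Int.gcd (A 0 0 + A 1 1) (B 0 0 + B 1 1) = 0
    · obtain ⟨h1, h2⟩ := Int.gcd_eq_zero_iff.mp hg0
      have : r = 0 := by rw [hr, h1, h2]; ring
      rw [this]; exact dvd_zero _
    · have hgS : Int.gcd (A 0 0 + A 1 1) (B 0 0 + B 1 1) ∈ Sset p q :=
        ⟨A 0 0, B 0 0, A 1 1, B 1 1, hp, hq, rfl, Nat.pos_of_ne_zero hg0⟩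
      have hDg : (↑D : ℤ) ∣ ↑(Int.gcd (A 0 0 + A 1 1) (B 0 0 + B 1 1)) := by
        exact_mod_cast hdvd _ hgS
      refine hDg.trans ?_
      rw [hr]
      exact dvd_sub (Dvd.dvd.mul_left (Int.gcd_dvd_left _ _) _)
        (Dvd.dvd.mul_left (Int.gcd_dvd_right _ _) _)
  · rintro ⟨⟨a0, x0, hp⟩, ⟨d0, u0, hq⟩, hr⟩
    obtain ⟨D, hD, hdvd⟩ := key p q _ _ _ _ hp hq
    obtain ⟨a, x, d, u, hp', hq', hg, hposg⟩ := Nat.sInf_mem (⟨D, hD⟩ : (Sset p q).Nonempty)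
    rw [hg] at hr
    obtain ⟨c, hc⟩ := hr
    have hbez := Int.gcd_eq_gcd_ab (a + d) (x + u)
    refine ⟨!![a, Int.gcdA (a + d) (x + u) * c; 0, d],
      !![x, -(Int.gcdB (a + d) (x + u) * c); 0, u], by simp [IsUpperTriangular],
      by simp [IsUpperTriangular], ?_⟩
    ext i j
    fin_cases i <;> fin_cases j <;>
      simp [pow_two, Matrix.mul_apply, Fin.sum_univ_two]
    · linear_combination hp'
    · linear_combination hc + c * hbez
    · linear_combination hq'
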